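/- Let k be an algebraically closed field and let A and B be finite-dimensional associative unital k-algebras (not necessarily commutative). If A and B are both local rings, then the tensor product algebra A ⊗[k] B is a local ring. -/

import Mathlib

open scoped TensorProduct

universe u

section Aux

variable {A : Type*} [Ring A]

/-- In a finite-dimensional algebra, a one-sided inverse makes both factors units. -/
theorem fd_isUnit_of_mul_eq_one (k : Type*) [Field k] [Algebra k A] [FiniteDimensional k A]
    {a b : A} (h : a * b = 1) : IsUnit a ∧ IsUnit b := by
  have hsurj : Function.Surjective (LinearMap.mulLeft k a) := by
    intro y
    exact ⟨b * y, by simp [LinearMap.mulLeft_apply, ← mul_assoc, h]⟩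
  have hinj : Function.Injective (LinearMap.mulLeft k a) :=
    LinearMap.injective_iff_surjective.2 hsurj
  have hba : b * a = 1 := by
    have : (LinearMap.mulLeft k a) (b * a) = (LinearMap.mulLeft k a) 1 := by
      simp [LinearMap.mulLeft_apply, ← mul_assoc, h]
    exact hinj this
  exact ⟨⟨⟨a, b, h, hba⟩, rfl⟩, ⟨⟨b, a, hba, h⟩, rfl⟩⟩

/-- In a (possibly noncommutative) local ring, the sum of two nonunits is a nonunit. -/
theorem nonunits_add' [IsLocalRing A] {a b : A} (ha : ¬IsUnit a) (hb : ¬IsUnit b) :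
    ¬IsUnit (a + b) := by
  intro h
  have h1 : (↑h.unit⁻¹ : A) * a + (↑h.unit⁻¹ : A) * b = 1 := by
    rw [← mul_add]
    exact h.val_inv_mul
  rcases IsLocalRing.isUnit_or_isUnit_of_add_one h1 with h2 | h2
  · exact ha (by simpa [← mul_assoc] using (h.unit.isUnit.mul h2 :
      IsUnit ((↑h.unit : A) * ((↑h.unit⁻¹ : A) * a))))
  · exact hb (by simpa [← mul_assoc] using (h.unit.isUnit.mul h2 :
      IsUnit ((↑h.unit : A) * ((↑h.unit⁻¹ : A) * b))))

/-- The set of nonunits of a local algebra over a field, as a `k`-submodule. -/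
def nonunitsSubmodule (k : Type*) (A : Type*) [Field k] [Ring A] [Algebra k A]
    [IsLocalRing A] : Submodule k A where
  carrier := nonunits A
  add_mem' := fun ha hb => nonunits_add' ha hb
  zero_mem' := (zero_mem_nonunits (α := A)).2 zero_ne_one
  smul_mem' := by
    intro c x hx h
    rcases eq_or_ne c 0 with rfl | hc
    · rw [zero_smul] at h
      exact (zero_mem_nonunits (α := A)).2 zero_ne_one h
    · have h2 : IsUnit ((algebraMap k A c⁻¹) * (c • x)) :=
        ((isUnit_iff_ne_zero.2 (inv_ne_zero hc)).map (algebraMap k A)).mul h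
      rw [Algebra.smul_def, ← mul_assoc, ← map_mul, inv_mul_cancel₀ hc, map_one, one_mul] at h2
      exact hx h2

variable {k : Type*} [Field k] [Algebra k A] [FiniteDimensional k A] [IsLocalRing A]

omit [FiniteDimensional k A] in
theorem mem_nonunitsSubmodule {x : A} : x ∈ nonunitsSubmodule k A ↔ ¬IsUnit x :=
  mem_nonunits_iff

theorem nonunitsSubmodule_mul_mem {x : A} (hx : x ∈ nonunitsSubmodule k A) (a : A) :
    x * a ∈ nonunitsSubmodule k A := by
  rw [mem_nonunitsSubmodule] at hx ⊢
  intro h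
  have h1 : x * (a * (↑h.unit⁻¹ : A)) = 1 := by
    rw [← mul_assoc]
    exact h.mul_val_inv
  exact hx (fd_isUnit_of_mul_eq_one k h1).1

theorem mul_nonunitsSubmodule_mem {x : A} (hx : x ∈ nonunitsSubmodule k A) (a : A) :
    a * x ∈ nonunitsSubmodule k A := by
  rw [mem_nonunitsSubmodule] at hx ⊢
  intro h
  have h1 : ((↑h.unit⁻¹ : A) * a) * x = 1 := by
    rw [mul_assoc]
    exact h.val_inv_mul
  exact hx (fd_isUnit_of_mul_eq_one k h1).2

omit [FiniteDimensional k A] in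
theorem isUnit_one_sub_nonunitsSubmodule {x : A} (hx : x ∈ nonunitsSubmodule k A) :
    IsUnit (1 - x) := by
  rcases IsLocalRing.isUnit_or_isUnit_of_add_one (show x + (1 - x) = 1 by abel) with h | h
  · exact absurd h (mem_nonunitsSubmodule.1 hx)
  · exact h

end Aux
section Nakayama

variable {k : Type*} [Field k] {A : Type*} [Ring A] [Algebra k A] [FiniteDimensional k A]
  [IsLocalRing A]

local notation "J" => nonunitsSubmodule k A

/-- Left ideal (as a `k`-submodule) generated by a finite family. -/
noncomputable def leftSpan (k : Type*) [Field k] [Algebra k A] {r : ℕ} (x : Fin r → A) :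
    Submodule k A :=
  ⨆ i, LinearMap.range (LinearMap.mulRight k (x i))

theorem nakayama_aux : ∀ (r : ℕ) (x : Fin r → A),
    (∀ i, x i ∈ J * leftSpan k x) → leftSpan k x = ⊥ := by
  intro r
  induction r with
  | zero => intro x _; simp [leftSpan]
  | succ r IH =>
    intro x hx
    set y : Fin r → A := x ∘ Fin.castSucc with hy
    -- Step A : J * leftSpan k x ≤ ⨆ i, J.map (mulRight (x i))
    have stepA : J * leftSpan k x ≤ ⨆ i, (J).map (LinearMap.mulRight k (x i)) := by
      rw [Submodule.mul_le]
      intro j hj n hn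
      refine Submodule.iSup_induction _ (motive := fun n => j * n ∈
        ⨆ i, (J).map (LinearMap.mulRight k (x i))) hn ?_ (by simp) ?_
      · rintro i _ ⟨a, rfl⟩
        refine Submodule.mem_iSup_of_mem i ?_
        exact ⟨j * a, nonunitsSubmodule_mul_mem hj a, by simp [mul_assoc]⟩
      · intro u v hu hv
        rw [mul_add]
        exact add_mem hu hv
    -- decompose x (last)
    obtain ⟨f, hf, hsum⟩ := (Submodule.mem_iSup_iff_exists_finsupp _ _).1
      (stepA (hx (Fin.last r)))
    choose g hg hgx using fun i => Submodule.mem_map.1 (hf i)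
    have hsum' : ∑ i, g i * x i = x (Fin.last r) := by
      rw [← hsum, Finsupp.sum_fintype _ _ (fun _ => rfl)]
      refine Finset.sum_congr rfl fun i _ => ?_
      rw [← hgx i]; simp
    have hrec : (1 - g (Fin.last r)) * x (Fin.last r) =
        ∑ i : Fin r, g (Fin.castSucc i) * y i := by
      rw [sub_mul, one_mul]
      nth_rewrite 1 [← hsum']
      rw [Fin.sum_univ_castSucc]
      simp [hy]
    have hu : IsUnit (1 - g (Fin.last r)) :=
      isUnit_one_sub_nonunitsSubmodule (hg (Fin.last r))
    have hlast : x (Fin.last r) = ∑ i : Fin r, ((↑hu.unit⁻¹ : A) * g (Fin.castSucc i)) * y i := by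
      have := congrArg (fun z => (↑hu.unit⁻¹ : A) * z) hrec
      simp only [← mul_assoc, Finset.mul_sum] at this
      rw [← this, hu.val_inv_mul, one_mul]
    -- leftSpan k x ≤ leftSpan k y
    have hle : leftSpan k x ≤ leftSpan k y := by
      refine iSup_le fun i => ?_
      refine Fin.lastCases ?_ ?_ i
      · rintro _ ⟨a, rfl⟩
        simp only [LinearMap.mulRight_apply]
        rw [hlast, Finset.mul_sum]
        refine sum_mem fun i _ => ?_
        refine Submodule.mem_iSup_of_mem i ⟨a * ((↑hu.unit⁻¹ : A) * g (Fin.castSucc i)), ?_⟩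
        simp [mul_assoc]
      · intro i
        rintro _ ⟨a, rfl⟩
        refine Submodule.mem_iSup_of_mem i ⟨a, ?_⟩
        simp [hy]
    have hy' : ∀ i, y i ∈ J * leftSpan k y := by
      intro i
      exact mul_le_mul' le_rfl hle (hx (Fin.castSucc i))
    have := IH y hy'
    exact le_bot_iff.1 (this ▸ hle)

/-- The nonunits submodule of a finite-dimensional local algebra is nilpotent. -/
theorem nonunitsSubmodule_pow_eq_bot : ∃ m : ℕ, 0 < m ∧ (J) ^ m = ⊥ := by
  -- the chain J^(n+1) is antitone
  have habs : ∀ n : ℕ, (J) ^ (n + 1 + 1) ≤ (J) ^ (n + 1) := by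
    intro n
    induction n with
    | zero =>
      have h2 : (J) * (J) ≤ (J) :=
        Submodule.mul_le.2 fun m hm n _ => nonunitsSubmodule_mul_mem hm n
      simpa [pow_succ, pow_one] using h2
    | succ n IHn =>
      rw [pow_succ, pow_succ (n := n + 1)]
      exact mul_le_mul' IHn le_rfl
  -- find where the dimension stabilizes
  set d : ℕ → ℕ := fun n => Module.finrank k ((J) ^ (n + 1) : Submodule k A) with hd
  have hmono : ∀ n, d (n + 1) ≤ d n := fun n => Submodule.finrank_mono (habs n)
  obtain ⟨n₀, hn₀⟩ : ∃ n₀, d n₀ = sInf (Set.range d) := by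
    obtain ⟨n₀, hn₀⟩ := Nat.sInf_mem (Set.range_nonempty d)
    exact ⟨n₀, hn₀⟩
  have heq : (J) ^ (n₀ + 1 + 1) = (J) ^ (n₀ + 1) := by
    apply Submodule.eq_of_le_of_finrank_le (habs n₀)
    rw [show Module.finrank k ((J) ^ (n₀ + 1) : Submodule k A) = d n₀ from rfl, hn₀]
    exact Nat.sInf_le ⟨n₀ + 1, rfl⟩
  -- Nakayama
  set N : Submodule k A := (J) ^ (n₀ + 1) with hN
  have hJN : (J) * N = N := by
    rw [hN, ← pow_succ']
    rw [show (J) ^ (n₀ + 1 + 1) = (J) ^ (n₀ + 2) from rfl] at heq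
    exact heq
  have hfg : N.FG := Module.Finite.iff_fg.1 inferInstance
  obtain ⟨r, x, hxspan⟩ := Submodule.fg_iff_exists_fin_generating_family.1 hfg
  have hNle : N ≤ leftSpan k x := by
    rw [← hxspan]
    refine Submodule.span_le.2 ?_
    rintro _ ⟨i, rfl⟩
    exact Submodule.mem_iSup_of_mem i ⟨1, by simp⟩
  have hx : ∀ i, x i ∈ (J) * leftSpan k x := by
    intro i
    have hxi : x i ∈ N := by
      rw [← hxspan]
      exact Submodule.subset_span ⟨i, rfl⟩
    rw [← hJN] at hxi
    exact mul_le_mul' le_rfl hNle hxi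
  have hbot := nakayama_aux r x hx
  refine ⟨n₀ + 1, Nat.succ_pos _, ?_⟩
  rw [← hN]
  exact le_bot_iff.1 (hbot ▸ hNle.trans (le_refl _))

end Nakayama
section Eigen

variable {k : Type*} [Field k] [IsAlgClosed k] {A : Type*} [Ring A] [Algebra k A]
  [FiniteDimensional k A] [Nontrivial A]

open Polynomial in
theorem exists_sub_algebraMap_nonunit (a : A) : ∃ c : k, ¬IsUnit (a - algebraMap k A c) := by
  have hint : IsIntegral k a := IsIntegral.of_finite k a
  set p := minpoly k a with hp
  have hp0 : p ≠ 0 := minpoly.ne_zero hint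
  have hdeg : 0 < p.degree := minpoly.degree_pos hint
  obtain ⟨c, hc⟩ := IsAlgClosed.exists_root p (by intro h; rw [h] at hdeg; exact lt_irrefl _ hdeg)
  obtain ⟨q, hq⟩ := Polynomial.dvd_iff_isRoot.2 hc
  refine ⟨c, fun hu => ?_⟩
  have hqne : q ≠ 0 := by
    rintro rfl
    rw [mul_zero] at hq
    exact hp0 hq
  have hqa : Polynomial.aeval a q ≠ 0 := by
    intro h0
    have hdvd : p ∣ q := minpoly.dvd k a h0
    have hle : p.natDegree ≤ q.natDegree := Polynomial.natDegree_le_of_dvd hdvd hqne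
    have hnd : p.natDegree = 1 + q.natDegree := by
      rw [hq, Polynomial.natDegree_mul (Polynomial.X_sub_C_ne_zero c) hqne,
        Polynomial.natDegree_X_sub_C]
    omega
  have hzero : (a - algebraMap k A c) * Polynomial.aeval a q = 0 := by
    have h1 : (a - algebraMap k A c) * Polynomial.aeval a q = Polynomial.aeval a p := by
      rw [hq, map_mul]
      simp
    rw [h1, hp, minpoly.aeval]
  have h2 := congrArg (fun z => (↑hu.unit⁻¹ : A) * z) hzero
  simp only [← mul_assoc, hu.val_inv_mul, one_mul, mul_zero] at h2
  exact hqa h2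

end Eigen

section PowTop

variable {k : Type*} [Field k] {A : Type*} [Ring A] [Algebra k A] [FiniteDimensional k A]
  [IsLocalRing A]

local notation "J" => nonunitsSubmodule k A

/-- `⊤ * J^n` : the two-sided ideal power of the nonunits ideal (as a submodule). -/
noncomputable def powTop (k : Type*) (A : Type*) [Field k] [Ring A] [Algebra k A]
    [IsLocalRing A] (n : ℕ) : Submodule k A :=
  ⊤ * (nonunitsSubmodule k A) ^ n

theorem powTop_zero : powTop k A 0 = ⊤ := by
  rw [powTop, pow_zero, mul_one]

theorem pow_mul_top_le (n : ℕ) : (J) ^ n * ⊤ ≤ ⊤ * (J) ^ n := by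
  cases n with
  | zero => rw [pow_zero, one_mul, mul_one]
  | succ n =>
    have habs : (J) ^ (n + 1) * ⊤ ≤ (J) ^ (n + 1) := by
      rw [Submodule.mul_le]
      intro m hm t _
      rw [pow_succ] at hm ⊢
      refine Submodule.mul_induction_on hm ?_ ?_
      · intro u hu j hj
        rw [mul_assoc]
        exact Submodule.mul_mem_mul hu (nonunitsSubmodule_mul_mem hj t)
      · intro u v hu hv
        rw [add_mul]
        exact add_mem hu hv
      -- note: mul_induction_on needs motive depending only on element
    calc (J) ^ (n + 1) * ⊤ ≤ (J) ^ (n + 1) := habs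
      _ = 1 * (J) ^ (n + 1) := (one_mul _).symm
      _ ≤ ⊤ * (J) ^ (n + 1) := mul_le_mul' le_top le_rfl

theorem powTop_mul_powTop (a b : ℕ) : powTop k A a * powTop k A b ≤ powTop k A (a + b) := by
  rw [powTop, powTop, powTop]
  calc ⊤ * (J) ^ a * (⊤ * (J) ^ b) = ⊤ * ((J) ^ a * ⊤) * (J) ^ b := by
        rw [mul_assoc, mul_assoc, mul_assoc]
    _ ≤ ⊤ * (⊤ * (J) ^ a) * (J) ^ b :=
        mul_le_mul' (mul_le_mul' le_rfl (pow_mul_top_le a)) le_rfl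
    _ = (⊤ * ⊤) * ((J) ^ a * (J) ^ b) := by rw [← mul_assoc, ← mul_assoc, mul_assoc (⊤ * ⊤)]
    _ ≤ ⊤ * ((J) ^ a * (J) ^ b) := mul_le_mul' le_top le_rfl
    _ = ⊤ * (J) ^ (a + b) := by rw [pow_add]

theorem le_powTop_one : (J) ≤ powTop k A 1 := by
  rw [powTop, pow_one]
  intro z hz
  simpa using Submodule.mul_mem_mul (Submodule.mem_top (x := (1 : A))) hz

theorem powTop_eq_bot : ∃ m : ℕ, 0 < m ∧ ∀ n, m ≤ n → powTop k A n = ⊥ := by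
  obtain ⟨m, hm, hbot⟩ := nonunitsSubmodule_pow_eq_bot (k := k) (A := A)
  refine ⟨m, hm, fun n hn => ?_⟩
  rw [powTop, ← Nat.add_sub_cancel' hn, pow_add, hbot, Submodule.bot_mul, Submodule.mul_bot]

end PowTop
/-- Over an algebraically closed field, the tensor product of two finite-dimensional local
algebras is local. -/
theorem isLocalRing_tensorProduct (k : Type u) [Field k] [IsAlgClosed k]
    (A B : Type u) [Ring A] [Ring B] [Algebra k A] [Algebra k B]
    [FiniteDimensional k A] [FiniteDimensional k B]
    [IsLocalRing A] [IsLocalRing B] :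
    IsLocalRing (A ⊗[k] B) := by
  haveI hnt : Nontrivial (A ⊗[k] B) := by
    have h : 0 < Module.finrank k (A ⊗[k] B) := by
      rw [Module.finrank_tensorProduct]
      exact Nat.mul_pos Module.finrank_pos Module.finrank_pos
    exact Module.finrank_pos_iff.1 h
  obtain ⟨mA, hmA, hA⟩ := powTop_eq_bot (k := k) (A := A)
  obtain ⟨mB, hmB, hB⟩ := powTop_eq_bot (k := k) (A := B)
  set Z : ℕ → ℕ → Submodule k (A ⊗[k] B) := fun a b =>
    Submodule.span k {t | ∃ x ∈ powTop k A a, ∃ y ∈ powTop k B b, t = x ⊗ₜ[k] y} with hZ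
  have hZmul : ∀ a b a' b', Z a b * Z a' b' ≤ Z (a + a') (b + b') := by
    intro a b a' b'
    rw [hZ, Submodule.span_mul_span]
    refine Submodule.span_le.2 ?_
    rintro t ht
    rw [Set.mem_mul] at ht
    obtain ⟨u, ⟨x, hx, y, hy, rfl⟩, v, ⟨x', hx', y', hy', rfl⟩, rfl⟩ := ht
    rw [Algebra.TensorProduct.tmul_mul_tmul]
    exact Submodule.subset_span ⟨x * x', powTop_mul_powTop a a' (Submodule.mul_mem_mul hx hx'),
      y * y', powTop_mul_powTop b b' (Submodule.mul_mem_mul hy hy'), rfl⟩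
  set S : Submodule k (A ⊗[k] B) := Z 1 0 ⊔ Z 0 1 with hS
  set V : ℕ → Submodule k (A ⊗[k] B) :=
    fun N => ⨆ (p : ℕ × ℕ) (_ : p.1 + p.2 = N), Z p.1 p.2 with hV
  have hSpow : ∀ N, S ^ N ≤ V N := by
    intro N
    induction N with
    | zero =>
      rw [pow_zero]
      have h1 : (1 : Submodule k (A ⊗[k] B)) ≤ Z 0 0 := by
        rw [Submodule.one_le]
        refine Submodule.subset_span ⟨1, ?_, 1, ?_, ?_⟩
        · rw [powTop_zero]; trivial
        · rw [powTop_zero]; trivial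
        · rw [Algebra.TensorProduct.one_def]
      exact h1.trans (le_iSup_of_le (0, 0) (le_iSup_of_le rfl le_rfl))
    | succ N IH =>
      rw [pow_succ]
      calc S ^ N * S ≤ V N * S := mul_le_mul' IH le_rfl
        _ = V N * Z 1 0 ⊔ V N * Z 0 1 := by rw [hS, Submodule.mul_sup]
        _ ≤ V (N + 1) := by
          refine sup_le ?_ ?_
          · rw [hV, Submodule.iSup_mul]
            refine iSup_le fun p => ?_
            rw [Submodule.iSup_mul]
            refine iSup_le fun hp => ?_
            refine (hZmul p.1 p.2 1 0).trans ?_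
            exact le_iSup_of_le (p.1 + 1, p.2 + 0) (le_iSup_of_le (by omega) le_rfl)
          · rw [hV, Submodule.iSup_mul]
            refine iSup_le fun p => ?_
            rw [Submodule.iSup_mul]
            refine iSup_le fun hp => ?_
            refine (hZmul p.1 p.2 0 1).trans ?_
            exact le_iSup_of_le (p.1 + 0, p.2 + 1) (le_iSup_of_le (by omega) le_rfl)
  have hVbot : V (mA + mB) = ⊥ := by
    rw [hV]
    refine le_bot_iff.1 (iSup_le fun p => iSup_le fun hp => ?_)
    have hcase : mA ≤ p.1 ∨ mB ≤ p.2 := by omega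
    refine Submodule.span_le.2 ?_
    rintro t ⟨x, hx, y, hy, rfl⟩
    rcases hcase with h | h
    · rw [hA p.1 h, Submodule.mem_bot] at hx
      simp [hx]
    · rw [hB p.2 h, Submodule.mem_bot] at hy
      simp [hy]
  have hnil : ∀ s ∈ S, IsNilpotent s := by
    intro s hs
    refine ⟨mA + mB, ?_⟩
    have h1 : s ^ (mA + mB) ∈ S ^ (mA + mB) := Submodule.pow_mem_pow _ hs _
    have h2 := (hSpow (mA + mB)).trans (le_of_eq hVbot) h1
    simpa using h2
  have hdec : ∀ t : A ⊗[k] B, ∃ c : k, t - algebraMap k (A ⊗[k] B) c ∈ S := by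
    intro t
    induction t using TensorProduct.induction_on with
    | zero => exact ⟨0, by simp⟩
    | tmul x y =>
      obtain ⟨cA, hcA⟩ := exists_sub_algebraMap_nonunit (k := k) x
      obtain ⟨cB, hcB⟩ := exists_sub_algebraMap_nonunit (k := k) y
      refine ⟨cA * cB, ?_⟩
      have hx' : x - algebraMap k A cA ∈ nonunitsSubmodule k A := mem_nonunitsSubmodule.2 hcA
      have hy' : y - algebraMap k B cB ∈ nonunitsSubmodule k B := mem_nonunitsSubmodule.2 hcB
      have halg : algebraMap k (A ⊗[k] B) (cA * cB)
          = (algebraMap k A cA) ⊗ₜ[k] (algebraMap k B cB) := by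
        rw [Algebra.algebraMap_eq_smul_one, Algebra.algebraMap_eq_smul_one,
          Algebra.algebraMap_eq_smul_one, ← TensorProduct.smul_tmul',
          TensorProduct.tmul_smul, smul_smul, Algebra.TensorProduct.one_def]
      have key : x ⊗ₜ[k] y - algebraMap k (A ⊗[k] B) (cA * cB)
          = (x - algebraMap k A cA) ⊗ₜ[k] y
            + (algebraMap k A cA) ⊗ₜ[k] (y - algebraMap k B cB) := by
        rw [halg, TensorProduct.sub_tmul, TensorProduct.tmul_sub]
        abel
      rw [key]
      refine add_mem ?_ ?_
      · refine le_sup_left (α := Submodule k (A ⊗[k] B)) ?_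
        exact Submodule.subset_span ⟨x - algebraMap k A cA, le_powTop_one hx', y,
          by rw [powTop_zero]; trivial, rfl⟩
      · refine le_sup_right (α := Submodule k (A ⊗[k] B)) ?_
        exact Submodule.subset_span ⟨algebraMap k A cA, by rw [powTop_zero]; trivial,
          y - algebraMap k B cB, le_powTop_one hy', rfl⟩
    | add u v hu hv =>
      obtain ⟨c, hc⟩ := hu
      obtain ⟨d, hd⟩ := hv
      refine ⟨c + d, ?_⟩
      have : u + v - algebraMap k (A ⊗[k] B) (c + d)
          = (u - algebraMap k (A ⊗[k] B) c) + (v - algebraMap k (A ⊗[k] B) d) := by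
        rw [map_add]; abel
      rw [this]
      exact add_mem hc hd
  have key : ∀ a : A ⊗[k] B, IsUnit a ∨ IsUnit (1 - a) := by
    intro a
    obtain ⟨c, hc⟩ := hdec a
    rcases eq_or_ne c 0 with rfl | hc0
    · right
      rw [map_zero, sub_zero] at hc
      exact (hnil a hc).isUnit_one_sub
    · left
      set s := a - algebraMap k (A ⊗[k] B) c with hs'
      have hnil' : IsNilpotent (c⁻¹ • s) := hnil _ (Submodule.smul_mem _ _ hc)
      have ha : a = (algebraMap k (A ⊗[k] B) c) * (1 + c⁻¹ • s) := by
        rw [mul_add, mul_one, ← Algebra.smul_def, smul_smul, mul_inv_cancel₀ hc0, one_smul, hs']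
        abel
      rw [ha]
      exact ((isUnit_iff_ne_zero.2 hc0).map (algebraMap k (A ⊗[k] B))).mul hnil'.isUnit_one_add
  refine ⟨?_⟩
  intro a b hab
  rcases key a with h | h
  · exact Or.inl h
  · have hb : b = 1 - a := by rw [← hab]; abel
    exact Or.inr (hb ▸ h)
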